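/- For every angle 0 < α < π there is a constant c_α > 0 with the following property. Let K ⊆ ℝ² be an intersection of two closed half-planes such that K does not contain a line, the corner point of K (the intersection of the two boundary lines) is the closest point of K to the origin, and the interior angle of K at the corner equals α. Let Δ_K be the distance from the origin to K. Then for every 0 < ε < 1/2: c_α · ε · e^{−(1+ε)·Δ_K²} ≤ 𝒢(K) ≤ e^{−Δ_K²/2}, where 𝒢 is the standard Gaussian measure on ℝ². -/

import Mathlib

open MeasureTheory ProbabilityTheory Real
open scoped RealInnerProductSpace

noncomputable section

/-- The standard Gaussian measure `𝒢` on the Euclidean plane. -/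
def gaussPlane : Measure (EuclideanSpace ℝ (Fin 2)) :=
  (Measure.pi fun _ => gaussianReal 0 1).map (WithLp.toLp 2)

open Set
open scoped ENNReal

namespace GaussWedge

def e2 : EuclideanSpace ℝ (Fin 2) ≃ᵐ ℝ × ℝ :=
  (MeasurableEquiv.toLp 2 (Fin 2 → ℝ)).symm.trans (MeasurableEquiv.piFinTwo (fun _ => ℝ))

def D2 (p : ℝ × ℝ) : ℝ≥0∞ := ENNReal.ofReal ((2*π)⁻¹ * rexp (-(p.1^2 + p.2^2)/2))

lemma pdf_mul (x y : ℝ) :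
    gaussianPDF 0 1 x * gaussianPDF 0 1 y = D2 (x, y) := by
  rw [gaussianPDF, gaussianPDF, gaussianPDFReal, gaussianPDFReal, D2,
    ← ENNReal.ofReal_mul (by positivity)]
  congr 1
  have h2π : (0:ℝ) ≤ 2 * π := by positivity
  simp only [NNReal.coe_one, mul_one, sub_zero]
  rw [show (√(2 * π))⁻¹ * rexp (-x ^ 2 / 2) * ((√(2 * π))⁻¹ * rexp (-y ^ 2 / 2)) =
      ((√(2*π)) * (√(2*π)))⁻¹ * (rexp (-x^2/2) * rexp (-y^2/2)) by rw [mul_inv]; ring,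
    Real.mul_self_sqrt h2π, ← Real.exp_add]
  ring_nf

lemma prod_gauss_eq :
    (gaussianReal 0 1).prod (gaussianReal 0 1) = (volume : Measure (ℝ×ℝ)).withDensity D2 := by
  refine Measure.prod_eq fun s t hs ht => ?_
  rw [withDensity_apply _ (hs.prod ht), Measure.volume_eq_prod, ← Measure.prod_restrict]
  have : ∀ p : ℝ × ℝ, D2 p = gaussianPDF 0 1 p.1 * gaussianPDF 0 1 p.2 := fun p =>
    (pdf_mul p.1 p.2).symm
  simp_rw [this]
  rw [lintegral_prod_mul (measurable_gaussianPDF 0 1).aemeasurable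
    (measurable_gaussianPDF 0 1).aemeasurable]
  rw [gaussianReal_of_var_ne_zero 0 one_ne_zero, withDensity_apply _ hs, withDensity_apply _ ht]

lemma gaussPlane_eq_lintegral {K : Set (EuclideanSpace ℝ (Fin 2))} (hK : MeasurableSet K) :
    gaussPlane K = ∫⁻ p in e2.symm ⁻¹' K, D2 p := by
  set S := e2.symm ⁻¹' K with hS_def
  have hS : MeasurableSet S := e2.symm.measurable hK
  have h := (measurePreserving_piFinTwo (fun _ : Fin 2 => gaussianReal 0 1)).measure_preimage
    hS.nullMeasurableSet
  have hKe : (MeasurableEquiv.piFinTwo fun _ : Fin 2 => ℝ) ⁻¹' S = WithLp.toLp 2 ⁻¹' K := by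
    ext x
    simp only [Set.mem_preimage, hS_def]
    rw [show (MeasurableEquiv.piFinTwo fun _ : Fin 2 => ℝ) x = e2 (WithLp.toLp 2 x) from rfl,
      MeasurableEquiv.symm_apply_apply]
  have h' : gaussPlane K
      = ((gaussianReal 0 1).prod (gaussianReal 0 1)) S := by
    rw [gaussPlane, Measure.map_apply (WithLp.measurable_toLp 2 _) hK, ← hKe]; exact h
  rw [h', prod_gauss_eq, withDensity_apply _ hS]

lemma integrable_f : Integrable (fun p : ℝ × ℝ => (2*π)⁻¹ * rexp (-(p.1^2 + p.2^2)/2)) := by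
  have h1 : Integrable (fun x : ℝ => rexp (-(1/2) * x^2)) := integrable_exp_neg_mul_sq (by norm_num)
  have h2 := (h1.mul_prod h1).const_mul ((2*π)⁻¹)
  rw [← Measure.volume_eq_prod] at h2
  refine h2.congr (Filter.Eventually.of_forall fun p => ?_); dsimp only
  rw [← Real.exp_add]
  congr 1
  ring

lemma radial_integral (Δ : ℝ) :
    ∫ x in Ioi Δ, x * ((2*π)⁻¹ * rexp (-x^2/2)) = (2*π)⁻¹ * rexp (-Δ^2/2) := by
  have hderiv : ∀ x ∈ Ioi Δ, HasDerivAt (fun r => -((2*π)⁻¹ * rexp (-r^2/2)))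
      (x * ((2*π)⁻¹ * rexp (-x^2/2))) x := by
    intro x _
    have h0 : HasDerivAt (fun r : ℝ => -r^2/2) (-x) x := by
      have := ((hasDerivAt_pow 2 x).neg).div_const 2
      refine this.congr_deriv ?_
      norm_num
      ring
    have h1 := (h0.exp.const_mul ((2*π)⁻¹)).neg
    refine h1.congr_deriv ?_
    ring
  have hint : IntegrableOn (fun x => x * ((2*π)⁻¹ * rexp (-x^2/2))) (Ioi Δ) := by
    have := (integrable_mul_exp_neg_mul_sq (b := 1/2) (by norm_num)).const_mul ((2*π)⁻¹)
    refine (this.congr ?_).integrableOn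
    filter_upwards with x
    rw [show -(1/2 : ℝ) * x^2 = -x^2/2 by ring]
    ring
  have htend : Filter.Tendsto (fun r : ℝ => -((2*π)⁻¹ * rexp (-r^2/2))) Filter.atTop (nhds 0) := by
    rw [show (0:ℝ) = -((2*π)⁻¹ * 0) by ring]
    refine Filter.Tendsto.neg (Filter.Tendsto.const_mul _ ?_)
    have hsq : Filter.Tendsto (fun r : ℝ => r^2) Filter.atTop Filter.atTop := by
      have := Filter.Tendsto.atTop_mul_atTop₀ (Filter.tendsto_id (α := ℝ)) Filter.tendsto_id
      refine this.congr fun r => ?_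
      simp only [id_eq]
      exact (pow_two r).symm
    have harg : Filter.Tendsto (fun r : ℝ => -r^2/2) Filter.atTop Filter.atBot :=
      Filter.Tendsto.atBot_div_const (by norm_num)
        ((Filter.tendsto_neg_atTop_atBot).comp hsq)
    exact tendsto_exp_atBot.comp harg
  have hcont : ContinuousWithinAt (fun r : ℝ => -((2*π)⁻¹ * rexp (-r^2/2))) (Ici Δ) Δ := by
    apply Continuous.continuousWithinAt
    fun_prop
  have := integral_Ioi_of_hasDerivAt_of_tendsto hcont hderiv hint htend
  rw [this]
  ring

lemma tail_lintegral (Δ : ℝ) (hΔ : 0 ≤ Δ) :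
    ∫⁻ p in {p : ℝ × ℝ | Δ^2 ≤ p.1^2 + p.2^2}, D2 p = ENNReal.ofReal (rexp (-Δ^2/2)) := by
  have hA : MeasurableSet {p : ℝ × ℝ | Δ^2 ≤ p.1^2 + p.2^2} := by
    apply measurableSet_le <;> fun_prop
  have h1 : ∫⁻ p in {p : ℝ × ℝ | Δ^2 ≤ p.1^2 + p.2^2}, D2 p
      = ENNReal.ofReal (∫ p in {p : ℝ × ℝ | Δ^2 ≤ p.1^2 + p.2^2},
          (2*π)⁻¹ * rexp (-(p.1^2 + p.2^2)/2)) := by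
    rw [ofReal_integral_eq_lintegral_ofReal integrable_f.integrableOn
      (Filter.Eventually.of_forall fun p => by positivity)]
    rfl
  rw [h1, ← integral_indicator hA, ← integral_comp_polarCoord_symm]
  have htm : MeasurableSet polarCoord.target := polarCoord.open_target.measurableSet
  have key : EqOn
      (fun p : ℝ × ℝ => p.1 • (Set.indicator {q : ℝ × ℝ | Δ^2 ≤ q.1^2 + q.2^2}
        (fun q => (2*π)⁻¹ * rexp (-(q.1^2 + q.2^2)/2)) (polarCoord.symm p)))
      (fun p : ℝ × ℝ => Set.indicator (Ici Δ) (fun r => r * ((2*π)⁻¹ * rexp (-r^2/2))) p.1)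
      polarCoord.target := by
    intro p hp
    rw [polarCoord_target] at hp
    have hp1 : 0 < p.1 := hp.1
    have hsum : (p.1 * cos p.2)^2 + (p.1 * sin p.2)^2 = p.1^2 := by
      have := sin_sq_add_cos_sq p.2
      linear_combination p.1^2 * this
    simp only [polarCoord_symm_apply]
    by_cases hm : Δ ≤ p.1
    · have hm2 : (p.1 * cos p.2, p.1 * sin p.2) ∈ {q : ℝ × ℝ | Δ^2 ≤ q.1^2 + q.2^2} := by
        simp only [mem_setOf_eq]
        rw [hsum]
        exact pow_le_pow_left₀ hΔ hm 2
      rw [Set.indicator_of_mem hm2, Set.indicator_of_mem (by exact hm)]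
      simp only [smul_eq_mul]
      rw [hsum]
    · push_neg at hm
      have hm2 : (p.1 * cos p.2, p.1 * sin p.2) ∉ {q : ℝ × ℝ | Δ^2 ≤ q.1^2 + q.2^2} := by
        simp only [mem_setOf_eq, not_le]
        rw [hsum]
        nlinarith
      rw [Set.indicator_of_notMem hm2, Set.indicator_of_notMem (by simpa using hm)]
      simp
  rw [setIntegral_congr_fun htm key, polarCoord_target]
  have hprodm : MeasurableSet (Ioi (0:ℝ) ×ˢ Ioo (-π) π) :=
    measurableSet_Ioi.prod measurableSet_Ioo
  rw [← integral_indicator hprodm]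
  have factor : Set.indicator (Ioi (0:ℝ) ×ˢ Ioo (-π) π)
      (fun p : ℝ × ℝ => Set.indicator (Ici Δ) (fun r => r * ((2*π)⁻¹ * rexp (-r^2/2))) p.1)
      = fun p : ℝ × ℝ =>
        (Set.indicator (Ioi 0) (fun x => Set.indicator (Ici Δ)
          (fun r => r * ((2*π)⁻¹ * rexp (-r^2/2))) x) p.1)
        * (Set.indicator (Ioo (-π) π) (fun _ => (1:ℝ)) p.2) := by
    funext p
    by_cases h1 : p.1 ∈ Ioi (0:ℝ) <;> by_cases h2 : p.2 ∈ Ioo (-π) π <;>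
      simp [Set.indicator_apply, Set.mem_prod, h1, h2]
  rw [factor, Measure.volume_eq_prod, integral_prod_mul]
  have haeeq : (Ioi (0:ℝ) ∩ Ici Δ : Set ℝ) =ᵐ[volume] Ioi Δ := by
    rw [MeasureTheory.ae_eq_set]
    constructor
    · refine measure_mono_null (fun x hx => ?_) (measure_singleton Δ)
      obtain ⟨⟨_, hge⟩, hnot⟩ := hx
      simp only [mem_Ioi, not_lt] at hnot
      simp [le_antisymm hnot hge]
    · have : Ioi Δ \ (Ioi 0 ∩ Ici Δ) = ∅ :=
        diff_eq_empty.2 fun x hx => ⟨lt_of_le_of_lt hΔ hx, mem_Ici.2 (le_of_lt hx)⟩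
      rw [this]; exact measure_empty
  rw [integral_indicator measurableSet_Ioi, setIntegral_indicator measurableSet_Ici,
    setIntegral_congr_set haeeq, radial_integral Δ,
    integral_indicator_const (1:ℝ) measurableSet_Ioo]
  rw [Real.volume_real_Ioo_of_le (by linarith [pi_pos]), smul_eq_mul, mul_one]
  congr 1
  have h2π : (2*π) ≠ 0 := by positivity
  field_simp
  ring

lemma norm_sq_coords (x : EuclideanSpace ℝ (Fin 2)) : ‖x‖^2 = x 0^2 + x 1^2 := by
  rw [EuclideanSpace.norm_eq, Real.sq_sqrt (by positivity)]
  simp [Fin.sum_univ_two, sq_abs]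

end GaussWedge

open GaussWedge

set_option maxHeartbeats 2000000 in
/-- Let `K` be an intersection of two closed half-planes such that `K` contains no line, the
corner (intersection of the two boundary lines) is the closest point of `K` to the origin, and
the interior angle of `K` at the corner is `α ∈ (0, π)` (equivalently, the angle between the
outward normals is `π - α`). Then for every `0 < ε < 1/2`,
`c_α · ε · e^{-(1+ε)Δ_K²} ≤ 𝒢(K) ≤ e^{-Δ_K²/2}`, where `Δ_K` is the distance from the origin
to `K`. -/
theorem gaussian_measure_wedge (α : ℝ) (hα0 : 0 < α) (hαπ : α < π) :
    ∃ c : ℝ, 0 < c ∧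
      ∀ (a₁ a₂ : EuclideanSpace ℝ (Fin 2)) (b₁ b₂ : ℝ) (K : Set (EuclideanSpace ℝ (Fin 2))),
        a₁ ≠ 0 → a₂ ≠ 0 →
        K = {x | ⟪a₁, x⟫ ≤ b₁} ∩ {x | ⟪a₂, x⟫ ≤ b₂} →
        (¬ ∃ p v : EuclideanSpace ℝ (Fin 2), v ≠ 0 ∧ ∀ t : ℝ, p + t • v ∈ K) →
        (∃ z : EuclideanSpace ℝ (Fin 2),
          ⟪a₁, z⟫ = b₁ ∧ ⟪a₂, z⟫ = b₂ ∧ ∀ x ∈ K, ‖z‖ ≤ ‖x‖) →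
        InnerProductGeometry.angle a₁ a₂ = π - α →
        ∀ ε : ℝ, 0 < ε → ε < 1 / 2 →
          c * ε * Real.exp (-((1 + ε) * (Metric.infDist 0 K) ^ 2)) ≤ (gaussPlane K).toReal ∧
            (gaussPlane K).toReal ≤ Real.exp (-(Metric.infDist 0 K) ^ 2 / 2) := by
  have hcos : Real.cos α < 1 := by
    have := Real.cos_lt_cos_of_nonneg_of_le_pi (le_refl 0) hαπ.le hα0
    simpa using this
  set ρ : ℝ := (1 - Real.cos α)/2 with hρ_def
  have hρ0 : 0 < ρ := by rw [hρ_def]; linarith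
  have hρ1 : ρ ≤ 1 := by
    have := Real.neg_one_le_cos α
    rw [hρ_def]; linarith
  refine ⟨ρ^2 * Real.exp (-4) / π, by positivity, ?_⟩
  intro a₁ a₂ b₁ b₂ K ha₁ ha₂ hK _hline hz hangle ε hε0 hε2
  obtain ⟨z, hz1, hz2, hzmin⟩ := hz
  have hKmeas : MeasurableSet K := by
    rw [hK]
    exact ((isClosed_le (continuous_const.inner continuous_id) continuous_const).inter
      (isClosed_le (continuous_const.inner continuous_id) continuous_const)).measurableSet
  have hzK : z ∈ K := by rw [hK]; exact ⟨le_of_eq hz1, le_of_eq hz2⟩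
  set Δ := Metric.infDist 0 K with hΔdef
  have hΔz : Δ = ‖z‖ := by
    apply le_antisymm
    · have h := Metric.infDist_le_dist_of_mem (x := (0 : EuclideanSpace ℝ (Fin 2))) hzK
      rwa [dist_zero_left] at h
    · by_contra h
      push_neg at h
      obtain ⟨y, hyK, hy⟩ := (Metric.infDist_lt_iff ⟨z, hzK⟩).1 h
      rw [dist_zero_left] at hy
      exact absurd (hzmin y hyK) (not_le.2 hy)
  have hΔ0 : 0 ≤ Δ := Metric.infDist_nonneg
  have hn₁ : ‖a₁‖ ≠ 0 := norm_ne_zero_iff.2 ha₁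
  have hn₂ : ‖a₂‖ ≠ 0 := norm_ne_zero_iff.2 ha₂
  have hn₁0 : 0 < ‖a₁‖ := norm_pos_iff.2 ha₁
  have hn₂0 : 0 < ‖a₂‖ := norm_pos_iff.2 ha₂
  have hcosangle : ⟪a₁, a₂⟫ = -(Real.cos α) * (‖a₁‖ * ‖a₂‖) := by
    have h := InnerProductGeometry.cos_angle a₁ a₂
    rw [hangle, Real.cos_pi_sub, eq_div_iff (mul_ne_zero hn₁ hn₂)] at h
    linarith
  have hcos21 : ⟪a₂, a₁⟫ = -(Real.cos α) * (‖a₁‖ * ‖a₂‖) := by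
    rw [real_inner_comm]
    exact hcosangle
  have hwex : ∃ w : EuclideanSpace ℝ (Fin 2),
      ⟪a₁, w⟫ = b₁ - ‖a₁‖ * ρ ∧ ⟪a₂, w⟫ = b₂ - ‖a₂‖ * ρ ∧ ‖w - z‖ ≤ 1 := by
    refine ⟨z - ((2*‖a₁‖)⁻¹) • a₁ - ((2*‖a₂‖)⁻¹) • a₂, ?_, ?_, ?_⟩
    · rw [inner_sub_right, inner_sub_right, real_inner_smul_right, real_inner_smul_right,
        real_inner_self_eq_norm_sq, hz1, hcosangle, hρ_def]
      field_simp
      ring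
    · rw [inner_sub_right, inner_sub_right, real_inner_smul_right, real_inner_smul_right,
        real_inner_self_eq_norm_sq, hz2, hcos21, hρ_def]
      field_simp
      ring
    · have hwzeq : z - ((2*‖a₁‖)⁻¹) • a₁ - ((2*‖a₂‖)⁻¹) • a₂ - z
          = -(((2*‖a₁‖)⁻¹) • a₁ + ((2*‖a₂‖)⁻¹) • a₂) := by abel
      rw [hwzeq, norm_neg]
      refine le_trans (norm_add_le _ _) ?_
      rw [norm_smul, norm_smul, Real.norm_eq_abs, Real.norm_eq_abs,
        abs_of_nonneg (by positivity), abs_of_nonneg (by positivity)]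
      rw [mul_inv, mul_inv]
      field_simp
      nlinarith [mul_pos hn₁0 hn₂0]
  obtain ⟨w, hwa₁, hwa₂, hwz⟩ := hwex
  have hball : ∀ x : EuclideanSpace ℝ (Fin 2), ‖x - w‖ ≤ ρ → x ∈ K := by
    intro x hx
    rw [hK]
    have key : ∀ a : EuclideanSpace ℝ (Fin 2), ⟪a, x⟫ = ⟪a, w⟫ + ⟪a, x - w⟫ := by
      intro a
      rw [← inner_add_right]
      congr 1
      abel
    constructor
    · show ⟪a₁, x⟫ ≤ b₁
      rw [key a₁, hwa₁]
      have hcs : ⟪a₁, x - w⟫ ≤ ‖a₁‖ * ‖x - w‖ := real_inner_le_norm a₁ (x - w)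
      have h2 : ‖a₁‖ * ‖x - w‖ ≤ ‖a₁‖ * ρ := mul_le_mul_of_nonneg_left hx (norm_nonneg _)
      linarith
    · show ⟪a₂, x⟫ ≤ b₂
      rw [key a₂, hwa₂]
      have hcs : ⟪a₂, x - w⟫ ≤ ‖a₂‖ * ‖x - w‖ := real_inner_le_norm a₂ (x - w)
      have h2 : ‖a₂‖ * ‖x - w‖ ≤ ‖a₂‖ * ρ := mul_le_mul_of_nonneg_left hx (norm_nonneg _)
      linarith
  have hwn : ‖w‖ ≤ Δ + 1 := by
    have h : ‖w‖ ≤ ‖z‖ + ‖w - z‖ := by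
      calc ‖w‖ = ‖z + (w - z)‖ := by congr 1; abel
        _ ≤ ‖z‖ + ‖w - z‖ := norm_add_le _ _
    rw [hΔz]
    linarith
  rw [gaussPlane_eq_lintegral hKmeas]
  set S := e2.symm ⁻¹' K with hS_def
  have hup : ∫⁻ p in S, D2 p ≤ ENNReal.ofReal (rexp (-Δ^2/2)) := by
    rw [← tail_lintegral Δ hΔ0]
    refine lintegral_mono_set fun p hp => ?_
    have hxK : e2.symm p ∈ K := hp
    have hx : ‖z‖ ≤ ‖e2.symm p‖ := hzmin _ hxK
    have hcoord : p.1^2 + p.2^2 = ‖e2.symm p‖^2 := by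
      rw [norm_sq_coords]
      rfl
    simp only [mem_setOf_eq]
    rw [hcoord, hΔz]
    exact pow_le_pow_left₀ (norm_nonneg z) hx 2
  have hfin : ∫⁻ p in S, D2 p ≠ ⊤ := (lt_of_le_of_lt hup ENNReal.ofReal_lt_top).ne
  set R : Set (ℝ×ℝ) := Ioo (w 0 - ρ/2) (w 0 + ρ/2) ×ˢ Ioo (w 1 - ρ/2) (w 1 + ρ/2) with hR_def
  have hRS : ∀ p ∈ R, p ∈ S ∧ p.1^2 + p.2^2 ≤ (Δ+2)^2 := by
    intro p hp
    obtain ⟨hp1, hp2⟩ := hp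
    simp only [mem_Ioo] at hp1 hp2
    set x := e2.symm p with hx_def
    have hc0 : x 0 = p.1 := rfl
    have hc1 : x 1 = p.2 := rfl
    have hxw : ‖x - w‖ ≤ ρ := by
      have hsq : ‖x - w‖^2 = (p.1 - w 0)^2 + (p.2 - w 1)^2 := by
        rw [norm_sq_coords]
        rfl
      have hb : ‖x - w‖^2 ≤ ρ^2 := by
        rw [hsq]
        nlinarith [hp1.1, hp1.2, hp2.1, hp2.2, hρ0]
      calc ‖x - w‖ = √(‖x - w‖^2) := (Real.sqrt_sq (norm_nonneg _)).symm
        _ ≤ √(ρ^2) := Real.sqrt_le_sqrt hb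
        _ = ρ := Real.sqrt_sq hρ0.le
    have hxK : x ∈ K := hball x hxw
    refine ⟨hxK, ?_⟩
    have hxn : ‖x‖ ≤ Δ + 2 := by
      calc ‖x‖ = ‖w + (x - w)‖ := by congr 1; abel
        _ ≤ ‖w‖ + ‖x - w‖ := norm_add_le _ _
        _ ≤ (Δ + 1) + ρ := add_le_add hwn hxw
        _ ≤ Δ + 2 := by linarith
    have : p.1^2 + p.2^2 = ‖x‖^2 := by rw [norm_sq_coords]; rfl
    rw [this]
    exact pow_le_pow_left₀ (norm_nonneg x) hxn 2
  have hlow : ENNReal.ofReal ((2*π)⁻¹ * rexp (-(Δ+2)^2/2) * ρ^2) ≤ ∫⁻ p in S, D2 p := by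
    have hRmeas : MeasurableSet R := measurableSet_Ioo.prod measurableSet_Ioo
    have hsub : R ⊆ S := fun p hp => (hRS p hp).1
    refine le_trans ?_ (lintegral_mono_set hsub)
    have hvol : volume R = ENNReal.ofReal (ρ^2) := by
      rw [hR_def, Measure.volume_eq_prod, Measure.prod_prod, Real.volume_Ioo, Real.volume_Ioo,
        show w 0 + ρ/2 - (w 0 - ρ/2) = ρ by ring, show w 1 + ρ/2 - (w 1 - ρ/2) = ρ by ring,
        ← ENNReal.ofReal_mul hρ0.le, ← pow_two]
    calc ENNReal.ofReal ((2*π)⁻¹ * rexp (-(Δ+2)^2/2) * ρ^2)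
        = ENNReal.ofReal ((2*π)⁻¹ * rexp (-(Δ+2)^2/2)) * ENNReal.ofReal (ρ^2) := by
          rw [← ENNReal.ofReal_mul (by positivity)]
      _ = ENNReal.ofReal ((2*π)⁻¹ * rexp (-(Δ+2)^2/2)) * volume R := by rw [hvol]
      _ = ∫⁻ _ in R, ENNReal.ofReal ((2*π)⁻¹ * rexp (-(Δ+2)^2/2)) := by
          rw [setLIntegral_const]
      _ ≤ ∫⁻ p in R, D2 p := by
          refine setLIntegral_mono' hRmeas fun p hp => ?_
          refine ENNReal.ofReal_le_ofReal ?_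
          refine mul_le_mul_of_nonneg_left ?_ (by positivity)
          refine Real.exp_le_exp.2 ?_
          have := (hRS p hp).2
          linarith
  constructor
  · have h1 : (2*π)⁻¹ * rexp (-(Δ+2)^2/2) * ρ^2 ≤ (∫⁻ p in S, D2 p).toReal :=
      (ENNReal.ofReal_le_iff_le_toReal hfin).1 hlow
    refine le_trans ?_ h1
    have key : ε * (rexp (-((1+ε)*Δ^2)) * rexp (-4)) ≤ (1/2) * rexp (-(Δ+2)^2/2) := by
      have hee : rexp (-((1+ε)*Δ^2)) * rexp (-4) ≤ rexp (-(Δ+2)^2/2) := by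
        rw [← Real.exp_add]
        refine Real.exp_le_exp.2 ?_
        nlinarith [mul_nonneg hε0.le (sq_nonneg Δ), sq_nonneg (Δ-2)]
      refine mul_le_mul hε2.le hee (by positivity) (by norm_num)
    have hfac := mul_le_mul_of_nonneg_left key (by positivity : (0:ℝ) ≤ ρ^2/π)
    calc ρ^2 * Real.exp (-4) / π * ε * rexp (-((1+ε)*Δ^2))
        = (ρ^2/π) * (ε * (rexp (-((1+ε)*Δ^2)) * rexp (-4))) := by ring
      _ ≤ (ρ^2/π) * ((1/2) * rexp (-(Δ+2)^2/2)) := hfac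
      _ = (2*π)⁻¹ * rexp (-(Δ+2)^2/2) * ρ^2 := by
          ring
  · have h2 := ENNReal.toReal_mono (by simp) hup
    rw [ENNReal.toReal_ofReal (Real.exp_nonneg _)] at h2
    calc (∫⁻ p in S, D2 p).toReal ≤ rexp (-Δ^2/2) := h2
      _ = rexp (-Δ^2/2) := rfl
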